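/- For a partition λ with at most N parts, the specialization s_λ(t) at t_m = a/m for all m ≥ 1 (i.e. all power sums p_m = a) equals ∏_{(i,j)∈λ} (a + j − i) / H_λ, where H_λ = ∏_{(i,j)∈λ} h(i,j) is the product of hook lengths. -/

import Mathlib

open Finset

noncomputable def pochC (a : ℂ) (n : ℕ) : ℂ := ∏ k ∈ Finset.range n, (a + k)

noncomputable def qPochC (x q : ℂ) (n : ℕ) : ℂ := ∏ k ∈ Finset.range n, (1 - x * q ^ k)

noncomputable def elemSchur (t : ℕ → ℂ) : ℕ → ℂ
  | 0 => 1
  | n + 1 =>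
      ((n : ℂ) + 1)⁻¹ *
        ∑ k ∈ Finset.range (n + 1), ((k : ℂ) + 1) * t (k + 1) * elemSchur t (n - k)
  termination_by n => n
  decreasing_by simp_wf <;> omega

noncomputable def pInt (t : ℕ → ℂ) (n : ℤ) : ℂ := if 0 ≤ n then elemSchur t n.toNat else 0

noncomputable def schurP (t : ℕ → ℂ) (l : List ℕ) : ℂ :=
  Matrix.det (Matrix.of fun i j : Fin l.length =>
    pInt t ((l.get i : ℤ) - ((i : ℕ) : ℤ) + ((j : ℕ) : ℤ)))

def conjCount (l : List ℕ) (j : ℕ) : ℕ := l.countP (fun a => decide (j < a))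

def conjPart (l : List ℕ) : List ℕ := (List.range l.headI).map (conjCount l)

def hookLen (l : List ℕ) (i j : ℕ) : ℕ := l.getD i 0 + conjCount l j - i - j - 1

noncomputable def hookProdC (l : List ℕ) : ℂ :=
  ∏ i ∈ Finset.range l.length, ∏ j ∈ Finset.range (l.getD i 0), ((hookLen l i j : ℕ) : ℂ)

noncomputable def hookProdQ (q : ℂ) (l : List ℕ) : ℂ :=
  ∏ i ∈ Finset.range l.length, ∏ j ∈ Finset.range (l.getD i 0), (1 - q ^ hookLen l i j)

def nStat (l : List ℕ) : ℕ := ∑ i ∈ Finset.range l.length, i * l.getD i 0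

noncomputable def rProd (r : ℤ → ℂ) (M : ℤ) (l : List ℕ) : ℂ :=
  ∏ i ∈ Finset.range l.length, ∏ j ∈ Finset.range (l.getD i 0), r ((j : ℤ) - (i : ℤ) + M)

noncomputable def pochPart (c : ℂ) (l : List ℕ) : ℂ :=
  ∏ i ∈ Finset.range l.length, pochC (c - (i : ℕ)) (l.getD i 0)

noncomputable def miwaP {N : ℕ} (x : Fin N → ℂ) (m : ℕ) : ℂ := ((m : ℂ))⁻¹ * ∑ i, x i ^ m

noncomputable def qPochInf (x q : ℂ) : ℂ := ∏' k : ℕ, (1 - x * q ^ k)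

noncomputable def GammaQ (q a : ℂ) : ℂ := (1 - q) ^ (1 - a) * qPochInf q q / qPochInf (q ^ a) q

def partList {n : ℕ} (p : n.Partition) : List ℕ := (p.parts.sort (· ≤ ·)).reverse


lemma pochC_zero (a : ℂ) : pochC a 0 = 1 := by simp [pochC]

lemma pochC_succ (a : ℂ) (n : ℕ) : pochC a (n+1) = pochC a n * (a + n) := by
  simp [pochC, Finset.prod_range_succ]

lemma pochC_add (a : ℂ) (p q : ℕ) : pochC a (p + q) = pochC a p * pochC (a + p) q := by
  rw [pochC, pochC, pochC, Finset.prod_range_add]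
  congr 1
  refine Finset.prod_congr rfl fun k _ => by push_cast; ring

lemma pochC_succ' (a : ℂ) (n : ℕ) : pochC a (n+1) = a * pochC (a+1) n := by
  rw [show n + 1 = 1 + n from by omega, pochC_add]
  simp [pochC]

lemma sum_pochC_div (a : ℂ) : ∀ n : ℕ,
    ∑ m ∈ Finset.range (n+1), pochC a m / (m.factorial : ℂ)
      = pochC (a+1) n / (n.factorial : ℂ)
  | 0 => by simp [pochC_zero]
  | n + 1 => by
    rw [Finset.sum_range_succ, sum_pochC_div a n, pochC_succ (a+1) n, pochC_succ' a n]
    have h1 : ((n+1).factorial : ℂ) = (n+1) * n.factorial := by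
      push_cast [Nat.factorial_succ]; ring
    have h2 : (n.factorial : ℂ) ≠ 0 := Nat.cast_ne_zero.2 n.factorial_ne_zero
    have h3 : ((n:ℂ)+1) ≠ 0 := by
      exact_mod_cast Nat.cast_ne_zero (R := ℂ).2 (Nat.succ_ne_zero n)
    field_simp [h1]
    rw [h1]; ring

lemma elemSchur_content (a : ℂ) : ∀ n : ℕ,
    elemSchur (fun m => a / (m : ℂ)) n = pochC a n / (n.factorial : ℂ)
  | 0 => by rw [elemSchur.eq_1]; simp [pochC_zero]
  | n + 1 => by
    rw [elemSchur.eq_2]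
    have hterm : ∀ k ∈ Finset.range (n+1),
        ((k : ℂ) + 1) * (a / ((k + 1 : ℕ) : ℂ)) * elemSchur (fun m => a / (m : ℂ)) (n - k)
          = a * (pochC a (n-k) / ((n-k).factorial : ℂ)) := by
      intro k _
      have hk : ((k:ℂ) + 1) ≠ 0 := by exact_mod_cast Nat.cast_ne_zero (R := ℂ).2 (Nat.succ_ne_zero k)
      rw [elemSchur_content a (n-k)]
      have : (((k+1 : ℕ)) : ℂ) = (k:ℂ) + 1 := by push_cast; ring
      rw [this]
      field_simp
    rw [Finset.sum_congr rfl hterm, ← Finset.mul_sum]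
    have hrefl := Finset.sum_range_reflect (fun m => pochC a m / (m.factorial : ℂ)) (n+1)
    simp only [Nat.add_sub_cancel] at hrefl
    rw [hrefl, sum_pochC_div a n]
    have h1 : ((n+1).factorial : ℂ) = ((n:ℂ)+1) * n.factorial := by
      push_cast [Nat.factorial_succ]; ring
    have h2 : (n.factorial : ℂ) ≠ 0 := Nat.cast_ne_zero.2 n.factorial_ne_zero
    have h3 : ((n:ℂ)+1) ≠ 0 := by
      exact_mod_cast Nat.cast_ne_zero (R := ℂ).2 (Nat.succ_ne_zero n)
    rw [pochC_succ' a n]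
    field_simp [h1]
    rw [h1]; ring

noncomputable def binC (x : ℂ) (n : ℤ) : ℂ :=
  if 0 ≤ n then pochC (x - n + 1) n.toNat / ((n.toNat).factorial : ℂ) else 0

lemma pochC_head (a : ℂ) (n : ℕ) : pochC a (n+1) = a * pochC (a+1) n := by
  rw [show n + 1 = 1 + n from by omega, pochC_add]
  simp [pochC]

lemma binC_neg (x : ℂ) (n : ℤ) (h : n < 0) : binC x n = 0 := by
  rw [binC, if_neg (by omega)]

lemma pochC_pascal_aux (c : ℂ) (k : ℕ) :
    pochC c (k+1) / (((k+1).factorial : ℕ) : ℂ)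
      = pochC (c-1) (k+1) / (((k+1).factorial : ℕ) : ℂ) + pochC c k / ((k.factorial : ℕ) : ℂ) := by
  rw [pochC_succ c k, pochC_head (c-1) k]
  have h1 : (((k+1).factorial : ℕ) : ℂ) = ((k:ℂ)+1) * (k.factorial : ℕ) := by
    push_cast [Nat.factorial_succ]; ring
  have h2 : ((k.factorial : ℕ) : ℂ) ≠ 0 := Nat.cast_ne_zero.2 k.factorial_ne_zero
  have h3 : ((k:ℂ)+1) ≠ 0 := by
    exact_mod_cast Nat.cast_ne_zero (R := ℂ).2 (Nat.succ_ne_zero k)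
  rw [h1]
  have : c - 1 + 1 = c := by ring
  rw [this]
  field_simp
  ring

lemma binC_pascal (x : ℂ) (n : ℤ) : binC x n = binC (x-1) n + binC (x-1) (n-1) := by
  rcases lt_trichotomy n 0 with h | h | h
  · rw [binC_neg _ _ h, binC_neg _ _ h, binC_neg _ _ (by omega)]; ring
  · subst h
    rw [binC, binC, if_pos le_rfl, if_pos le_rfl, binC_neg _ _ (by norm_num)]
    simp [pochC]
  · obtain ⟨k, hk⟩ : ∃ k : ℕ, n = (k : ℤ) + 1 := ⟨(n-1).toNat, by omega⟩
    subst hk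
    rw [binC, binC, binC, if_pos (by omega), if_pos (by omega), if_pos (by omega)]
    have h1 : ((k:ℤ) + 1).toNat = k + 1 := by omega
    have h2 : ((k:ℤ) + 1 - 1).toNat = k := by omega
    rw [h1, h2]
    have e1 : x - (((k:ℤ)+1 : ℤ) : ℂ) + 1 = x - k := by push_cast; ring
    have e2 : x - 1 - (((k:ℤ)+1 : ℤ) : ℂ) + 1 = (x - k) - 1 := by push_cast; ring
    have e3 : x - 1 - (((k:ℤ)+1-1 : ℤ) : ℂ) + 1 = x - k := by push_cast; ring
    rw [e1, e2, e3]
    exact pochC_pascal_aux (x - k) k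

noncomputable def Acal (a : ℂ) (c : ℕ) (n : ℤ) : ℂ := binC (a + (n : ℂ) - 1 - (c : ℂ)) n

lemma Acal_succ (a : ℂ) (c : ℕ) (n : ℤ) :
    Acal a (c+1) n = Acal a c n - Acal a c (n-1) := by
  have h := binC_pascal (a + (n:ℂ) - 1 - (c:ℂ)) n
  unfold Acal
  rw [show a + (n:ℂ) - 1 - ((c+1:ℕ):ℂ) = (a + (n:ℂ) - 1 - (c:ℂ)) - 1 from by push_cast; ring,
      show a + (((n-1:ℤ)):ℂ) - 1 - (c:ℂ) = (a + (n:ℂ) - 1 - (c:ℂ)) - 1 from by push_cast; ring]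
  linear_combination (-1 : ℂ) * h

lemma sum_diff (a : ℂ) : ∀ (c : ℕ) (n : ℤ),
    ∑ t ∈ Finset.range (c+1), ((-1:ℂ))^t * ((c.choose t : ℕ) : ℂ) * Acal a 0 (n - t)
      = Acal a c n
  | 0, n => by simp
  | c + 1, n => by
    rw [Finset.sum_range_succ']
    have hsplit : ∀ s ∈ Finset.range (c+1),
        ((-1:ℂ))^(s+1) * (((c+1).choose (s+1) : ℕ) : ℂ) * Acal a 0 (n - (s+1 : ℕ))
          = (-1:ℂ)^(s+1) * ((c.choose (s+1) : ℕ) : ℂ) * Acal a 0 (n - (s+1:ℕ))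
            - ((-1:ℂ))^s * ((c.choose s : ℕ) : ℂ) * Acal a 0 ((n-1) - s) := by
      intro s _
      rw [Nat.choose_succ_succ]
      have : n - ((s+1 : ℕ) : ℤ) = (n - 1) - (s : ℕ) := by push_cast; omega
      rw [this]
      push_cast
      ring
    rw [Finset.sum_congr rfl hsplit, Finset.sum_sub_distrib, sum_diff a c (n-1)]
    have hre : (∑ s ∈ Finset.range (c+1),
        (-1:ℂ)^(s+1) * ((c.choose (s+1) : ℕ) : ℂ) * Acal a 0 (n - (s+1:ℕ)))
        + (-1:ℂ)^0 * ((((c+1).choose 0 : ℕ)) : ℂ) * Acal a 0 (n - (0:ℕ))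
        = Acal a c n := by
      have h0 : ((((c+1).choose 0 : ℕ)) : ℂ) = ((c.choose 0 : ℕ) : ℂ) := by simp
      rw [h0]
      rw [← Finset.sum_range_succ' (fun t => ((-1:ℂ))^t * ((c.choose t : ℕ) : ℂ) * Acal a 0 (n - t)) (c+1)]
      rw [Finset.sum_range_succ]
      simp only [Nat.choose_succ_self, Nat.cast_zero, mul_zero, zero_mul, add_zero]
      exact sum_diff a c n
    rw [Acal_succ]
    linear_combination hre

lemma conjCount_eq_card (l : List ℕ) (j : ℕ) :
    conjCount l j = ((Finset.range l.length).filter (fun r => j < l.getD r 0)).card := by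
  induction l with
  | nil => simp [conjCount]
  | cons x t ih =>
    rw [conjCount, List.countP_cons]
    simp only [Finset.card_filter] at *
    rw [List.length_cons, Finset.sum_range_succ']
    simp only [List.getD_cons_succ, List.getD_cons_zero]
    rw [← conjCount]
    rw [ih]
    simp [add_comm]

section Hook
variable {l : List ℕ} (hl : l.Pairwise (· ≥ ·))

lemma getD_eq_get (i : ℕ) (h : i < l.length) : l.getD i 0 = l.get ⟨i, h⟩ := by
  simp [List.getD_eq_getElem?_getD, List.getElem?_eq_getElem h]

include hl in
lemma lam_anti {r s : ℕ} (hrs : r ≤ s) (hs : s < l.length) : l.getD s 0 ≤ l.getD r 0 := by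
  rcases eq_or_lt_of_le hrs with h | h
  · subst h; rfl
  · rw [getD_eq_get s hs, getD_eq_get r (lt_trans h hs)]
    exact List.Pairwise.rel_get_of_lt hl (by exact h)

include hl in
lemma conj_ge {i j : ℕ} (hi : i < l.length) (hj : j < l.getD i 0) :
    i + 1 ≤ conjCount l j := by
  rw [conjCount_eq_card]
  have : Finset.range (i+1) ⊆ (Finset.range l.length).filter (fun r => j < l.getD r 0) := by
    intro r hr
    rw [Finset.mem_range] at hr
    rw [Finset.mem_filter, Finset.mem_range]
    have hr' : r ≤ i := by omega
    exact ⟨by omega, lt_of_lt_of_le hj (lam_anti hl hr' hi)⟩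
  simpa using Finset.card_le_card this

lemma conj_le_len (j : ℕ) : conjCount l j ≤ l.length := by
  rw [conjCount_eq_card]
  simpa using Finset.card_le_card (Finset.filter_subset (fun r => j < l.getD r 0) (Finset.range l.length))

include hl in
lemma conj_le {k j : ℕ} (hk : k < l.length) (hj : l.getD k 0 ≤ j) :
    conjCount l j ≤ k := by
  rw [conjCount_eq_card]
  have : (Finset.range l.length).filter (fun r => j < l.getD r 0) ⊆ Finset.range k := by
    intro r hr
    rw [Finset.mem_filter, Finset.mem_range] at hr
    rw [Finset.mem_range]
    by_contra hge
    have : l.getD r 0 ≤ l.getD k 0 := lam_anti hl (by omega) hr.1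
    omega
  simpa using Finset.card_le_card this

lemma conj_anti {j j' : ℕ} (h : j ≤ j') : conjCount l j' ≤ conjCount l j := by
  rw [conjCount_eq_card, conjCount_eq_card]
  apply Finset.card_le_card
  intro r hr
  rw [Finset.mem_filter] at *
  exact ⟨hr.1, by omega⟩

end Hook

def mFun (l : List ℕ) (i : ℕ) : ℕ := l.getD i 0 + (l.length - 1 - i)

lemma prod_Icc_id_fact (n : ℕ) : (∏ x ∈ Finset.Icc 1 n, x) = n.factorial := by
  induction n with
  | zero => simp
  | succ n ih => rw [Finset.prod_Icc_succ_top (by omega), ih, Nat.factorial_succ, mul_comm]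

section Row
variable {l : List ℕ} (hl : l.Pairwise (· ≥ ·))

include hl in
lemma mFun_lt {i k : ℕ} (hik : i < k) (hk : k < l.length) : mFun l k < mFun l i := by
  have h1 := lam_anti hl (le_of_lt hik) hk
  unfold mFun; omega

include hl in
lemma hook_pos {i j : ℕ} (hi : i < l.length) (hj : j < l.getD i 0) :
    1 ≤ hookLen l i j ∧ hookLen l i j ≤ mFun l i := by
  have h1 := conj_ge hl hi hj
  have h2 := conj_le_len (l := l) j
  unfold hookLen mFun; omega

include hl in
lemma hook_strict {i j j' : ℕ} (hi : i < l.length) (hjj : j < j') (hj' : j' < l.getD i 0) :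
    hookLen l i j' < hookLen l i j := by
  have h1 := conj_anti (l := l) (le_of_lt hjj)
  have h2 := conj_ge hl hi hj'
  unfold hookLen; omega

include hl in
lemma hook_ne_gap {i j k : ℕ} (hi : i < l.length) (hj : j < l.getD i 0)
    (hik : i < k) (hk : k < l.length) :
    hookLen l i j ≠ mFun l i - mFun l k := by
  intro heq
  have hlamki : l.getD k 0 ≤ l.getD i 0 := lam_anti hl (le_of_lt hik) hk
  have hcg := conj_ge hl hi hj
  have hcl := conj_le_len (l := l) j
  have hkey : conjCount l j + l.getD k 0 = j + k + 1 := by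
    unfold hookLen mFun at heq; omega
  rcases lt_or_ge j (l.getD k 0) with hc | hc
  · have := conj_ge hl hk hc
    omega
  · have := conj_le hl hk hc
    omega

include hl in
lemma row_identity {i : ℕ} (hi : i < l.length) :
    (∏ j ∈ Finset.range (l.getD i 0), hookLen l i j) *
      (∏ k ∈ Finset.Ioo i l.length, (mFun l i - mFun l k)) = (mFun l i).factorial := by
  classical
  set L := l.length with hL
  set M := mFun l i with hM
  set S1 := (Finset.range (l.getD i 0)).image (hookLen l i) with hS1
  set S2 := (Finset.Ioo i L).image (fun k => M - mFun l k) with hS2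
  have inj1 : ∀ x ∈ Finset.range (l.getD i 0), ∀ y ∈ Finset.range (l.getD i 0),
      hookLen l i x = hookLen l i y → x = y := by
    intro x hx y hy hxy
    rw [Finset.mem_range] at hx hy
    rcases lt_trichotomy x y with h | h | h
    · exact absurd hxy (by have := hook_strict hl hi h hy; omega)
    · exact h
    · exact absurd hxy (by have := hook_strict hl hi h hx; omega)
  have inj2 : ∀ x ∈ Finset.Ioo i L, ∀ y ∈ Finset.Ioo i L,
      M - mFun l x = M - mFun l y → x = y := by
    intro x hx y hy hxy
    rw [Finset.mem_Ioo] at hx hy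
    have h1 := mFun_lt hl hx.1 hx.2
    have h2 := mFun_lt hl hy.1 hy.2
    rcases lt_trichotomy x y with h | h | h
    · have := mFun_lt hl h hy.2; omega
    · exact h
    · have := mFun_lt hl h hx.2; omega
  have sub1 : S1 ⊆ Finset.Icc 1 M := by
    intro x hx
    rw [hS1, Finset.mem_image] at hx
    obtain ⟨j, hj, rfl⟩ := hx
    rw [Finset.mem_range] at hj
    have := hook_pos hl hi hj
    rw [Finset.mem_Icc]; omega
  have sub2 : S2 ⊆ Finset.Icc 1 M := by
    intro x hx
    rw [hS2, Finset.mem_image] at hx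
    obtain ⟨k, hk, rfl⟩ := hx
    rw [Finset.mem_Ioo] at hk
    have := mFun_lt hl hk.1 hk.2
    rw [Finset.mem_Icc]; omega
  have hdisj : Disjoint S1 S2 := by
    rw [Finset.disjoint_left]
    intro x hx1 hx2
    rw [hS1, Finset.mem_image] at hx1
    rw [hS2, Finset.mem_image] at hx2
    obtain ⟨j, hj, rfl⟩ := hx1
    obtain ⟨k, hk, hkeq⟩ := hx2
    rw [Finset.mem_range] at hj
    rw [Finset.mem_Ioo] at hk
    exact hook_ne_gap hl hi hj hk.1 hk.2 hkeq.symm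
  have hcard1 : S1.card = l.getD i 0 := by
    rw [hS1, Finset.card_image_of_injOn (fun x hx y hy => inj1 x hx y hy), Finset.card_range]
  have hcard2 : S2.card = L - i - 1 := by
    rw [hS2, Finset.card_image_of_injOn (fun x hx y hy => inj2 x hx y hy), Nat.card_Ioo]
  have hunion : S1 ∪ S2 = Finset.Icc 1 M := by
    apply Finset.eq_of_subset_of_card_le (Finset.union_subset sub1 sub2)
    rw [Finset.card_union_of_disjoint hdisj, hcard1, hcard2, Nat.card_Icc]
    rw [hM]; unfold mFun; omega
  calc (∏ j ∈ Finset.range (l.getD i 0), hookLen l i j) *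
      (∏ k ∈ Finset.Ioo i L, (M - mFun l k))
      = (∏ x ∈ S1, x) * (∏ x ∈ S2, x) := by
        rw [hS1, hS2, Finset.prod_image inj1, Finset.prod_image inj2]
    _ = ∏ x ∈ S1 ∪ S2, x := (Finset.prod_union hdisj).symm
    _ = ∏ x ∈ Finset.Icc 1 M, x := by rw [hunion]
    _ = M.factorial := prod_Icc_id_fact M

end Row
section Det
variable (a : ℂ) (l : List ℕ)

noncomputable def Mmat : Matrix (Fin l.length) (Fin l.length) ℂ :=
  Matrix.of fun i j : Fin l.length =>
    pInt (fun m => a / (m : ℂ)) ((l.get i : ℤ) - ((i : ℕ) : ℤ) + ((j : ℕ) : ℤ))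

noncomputable def Tmat : Matrix (Fin l.length) (Fin l.length) ℂ :=
  Matrix.of fun k j : Fin l.length =>
    if (k:ℕ) ≤ (j:ℕ) then ((-1:ℂ))^((j:ℕ)-(k:ℕ)) * ((((j:ℕ).choose ((j:ℕ)-(k:ℕ))) : ℕ) : ℂ)
    else 0

lemma schurP_eq_det : schurP (fun m => a / (m : ℂ)) l = (Mmat a l).det := rfl

lemma det_Tmat : (Tmat l).det = 1 := by
  rw [Matrix.det_of_upperTriangular]
  · refine Finset.prod_eq_one fun j _ => ?_
    simp [Tmat]
  · intro i j hij
    simp only [Tmat, Matrix.of_apply]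
    rw [if_neg (by exact Nat.not_le.2 hij)]

lemma pInt_eq_Acal (n : ℤ) : pInt (fun m => a / (m : ℂ)) n = Acal a 0 n := by
  rw [pInt, Acal, binC]
  rcases le_or_gt 0 n with h | h
  · rw [if_pos h, if_pos h, elemSchur_content]
    congr 2
    push_cast; ring
  · rw [if_neg (by omega), if_neg (by omega)]

lemma MT_apply (i j : Fin l.length) :
    (Mmat a l * Tmat l) i j = Acal a (j:ℕ) ((l.getD (i:ℕ) 0 : ℤ) - (i:ℕ) + (j:ℕ)) := by
  rw [Matrix.mul_apply]
  have hstep : ∀ k : Fin l.length,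
      Mmat a l i k * Tmat l k j
        = (fun k : ℕ => pInt (fun m => a / (m : ℂ)) ((l.getD (i:ℕ) 0 : ℤ) - (i:ℕ) + k) *
            (if k ≤ (j:ℕ) then ((-1:ℂ))^((j:ℕ)-k) * ((((j:ℕ).choose ((j:ℕ)-k)) : ℕ) : ℂ) else 0)) (k:ℕ) := by
    intro k
    simp only [Mmat, Tmat, Matrix.of_apply]
    rw [getD_eq_get (l := l) (i:ℕ) i.isLt]
  rw [Finset.sum_congr rfl (fun k _ => hstep k),
    Fin.sum_univ_eq_sum_range
      (fun k : ℕ => pInt (fun m => a / (m : ℂ)) ((l.getD (i:ℕ) 0 : ℤ) - (i:ℕ) + k) *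
        (if k ≤ (j:ℕ) then ((-1:ℂ))^((j:ℕ)-k) * ((((j:ℕ).choose ((j:ℕ)-k)) : ℕ) : ℂ) else 0))
      l.length]
  rw [← Finset.sum_subset (Finset.range_subset_range.2 (Nat.succ_le_of_lt j.isLt))
      (fun k _ hk => by
        rw [Finset.mem_range, Nat.lt_succ_iff] at hk
        rw [if_neg (by omega), mul_zero])]
  have hrefl := Finset.sum_range_reflect
    (fun k : ℕ => pInt (fun m => a / (m : ℂ)) ((l.getD (i:ℕ) 0 : ℤ) - (i:ℕ) + k) *
      (if k ≤ (j:ℕ) then ((-1:ℂ))^((j:ℕ)-k) * ((((j:ℕ).choose ((j:ℕ)-k)) : ℕ) : ℂ) else 0)) ((j:ℕ)+1)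
  simp only [Nat.add_sub_cancel] at hrefl
  rw [← hrefl]
  have hterm : ∀ t ∈ Finset.range ((j:ℕ)+1),
      pInt (fun m => a / (m : ℂ)) ((l.getD (i:ℕ) 0 : ℤ) - (i:ℕ) + ((j:ℕ) - t : ℕ)) *
        (if ((j:ℕ) - t : ℕ) ≤ (j:ℕ) then
          ((-1:ℂ))^((j:ℕ)-((j:ℕ)-t)) * ((((j:ℕ).choose ((j:ℕ)-((j:ℕ)-t))) : ℕ) : ℂ) else 0)
      = ((-1:ℂ))^t * ((((j:ℕ).choose t) : ℕ) : ℂ)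
          * Acal a 0 (((l.getD (i:ℕ) 0 : ℤ) - (i:ℕ) + (j:ℕ)) - t) := by
    intro t ht
    rw [Finset.mem_range, Nat.lt_succ_iff] at ht
    rw [if_pos (by omega)]
    have h1 : (j:ℕ) - ((j:ℕ) - t) = t := by omega
    have h2 : (((j:ℕ) - t : ℕ) : ℤ) = ((j:ℕ) : ℤ) - t := by omega
    rw [h1, h2, pInt_eq_Acal]
    have h3 : (l.getD (i:ℕ) 0 : ℤ) - (i:ℕ) + ((j:ℕ) - (t:ℤ))
        = ((l.getD (i:ℕ) 0 : ℤ) - (i:ℕ) + (j:ℕ)) - t := by ring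
    rw [h3]; ring
  rw [Finset.sum_congr rfl hterm, sum_diff]

end Det
section Fact
variable (a : ℂ) (l : List ℕ)

noncomputable def cRow (i : ℕ) : ℂ :=
  pochC (a - l.length + 1) (mFun l i) / (((mFun l i).factorial : ℕ) : ℂ)

noncomputable def eCol (j : ℕ) : ℂ := pochC (a - l.length + 1) (l.length - 1 - j)

noncomputable def Vmat : Matrix (Fin l.length) (Fin l.length) ℂ :=
  Matrix.of fun i j : Fin l.length =>
    ∏ s ∈ Finset.range (l.length - 1 - (j:ℕ)), ((mFun l (i:ℕ) : ℂ) - (s:ℕ))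

lemma entry_fact (i j : Fin l.length) :
    eCol a l (j:ℕ) * Acal a (j:ℕ) ((l.getD (i:ℕ) 0 : ℤ) - (i:ℕ) + (j:ℕ))
      = cRow a l (i:ℕ) * Vmat l i j := by
  have hiL : (i:ℕ) < l.length := i.isLt
  have hjL : (j:ℕ) < l.length := j.isLt
  have hMval : mFun l (i:ℕ) = l.getD (i:ℕ) 0 + (l.length - 1 - (i:ℕ)) := rfl
  rcases le_or_gt ((i:ℕ):ℤ) ((l.getD (i:ℕ) 0 : ℤ) + (j:ℕ)) with hn | hn
  · -- nonneg case
    have htoNat : ((l.getD (i:ℕ) 0 : ℤ) - (i:ℕ) + (j:ℕ)).toNat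
        = l.getD (i:ℕ) 0 + (j:ℕ) - (i:ℕ) := by omega
    rw [Acal, binC, if_pos (by omega), htoNat]
    have harg : a + (((l.getD (i:ℕ) 0 : ℤ) - (i:ℕ) + (j:ℕ) : ℤ) : ℂ) - 1 - ((j:ℕ):ℂ)
        - (((l.getD (i:ℕ) 0 : ℤ) - (i:ℕ) + (j:ℕ) : ℤ) : ℂ) + 1 = a - ((j:ℕ):ℂ) := by ring
    rw [harg]
    have hsplitM : mFun l (i:ℕ) = (l.length - 1 - (j:ℕ)) + (l.getD (i:ℕ) 0 + (j:ℕ) - (i:ℕ)) := by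
      omega
    have hpoch : pochC (a - l.length + 1) (mFun l (i:ℕ))
        = pochC (a - l.length + 1) (l.length - 1 - (j:ℕ))
          * pochC (a - ((j:ℕ):ℂ)) (l.getD (i:ℕ) 0 + (j:ℕ) - (i:ℕ)) := by
      rw [hsplitM, pochC_add]
      congr 2
      have : ((l.length - 1 - (j:ℕ) : ℕ) : ℂ) = (l.length:ℂ) - 1 - (j:ℕ) := by
        push_cast [Nat.cast_sub (by omega : (j:ℕ) ≤ l.length - 1),
          Nat.cast_sub (by omega : 1 ≤ l.length)]
        ring
      rw [this]; ring
    have hV : Vmat l i j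
        = (((mFun l (i:ℕ)).descFactorial (l.length - 1 - (j:ℕ)) : ℕ) : ℂ) := by
      rw [Vmat, Matrix.of_apply, Nat.descFactorial_eq_prod_range, Nat.cast_prod]
      refine Finset.prod_congr rfl fun s hs => ?_
      rw [Finset.mem_range] at hs
      rw [Nat.cast_sub (by omega : s ≤ mFun l (i:ℕ))]
    have hfact : (l.getD (i:ℕ) 0 + (j:ℕ) - (i:ℕ)).factorial
        * (mFun l (i:ℕ)).descFactorial (l.length - 1 - (j:ℕ)) = (mFun l (i:ℕ)).factorial := by
      have := Nat.factorial_mul_descFactorial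
        (show l.length - 1 - (j:ℕ) ≤ mFun l (i:ℕ) by omega)
      rwa [show mFun l (i:ℕ) - (l.length - 1 - (j:ℕ)) = l.getD (i:ℕ) 0 + (j:ℕ) - (i:ℕ) by omega]
        at this
    rw [hV, cRow, hpoch, eCol]
    have h1 : (((l.getD (i:ℕ) 0 + (j:ℕ) - (i:ℕ)).factorial : ℕ) : ℂ) ≠ 0 :=
      Nat.cast_ne_zero.2 (Nat.factorial_ne_zero _)
    have h2 : (((mFun l (i:ℕ)).factorial : ℕ) : ℂ) ≠ 0 :=
      Nat.cast_ne_zero.2 (Nat.factorial_ne_zero _)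
    have h3 : (((mFun l (i:ℕ)).factorial : ℕ) : ℂ)
        = ((l.getD (i:ℕ) 0 + (j:ℕ) - (i:ℕ)).factorial : ℂ)
          * ((mFun l (i:ℕ)).descFactorial (l.length - 1 - (j:ℕ)) : ℂ) := by
      exact_mod_cast congrArg (Nat.cast (R := ℂ)) hfact.symm
    rw [h3]
    have h4 : (((mFun l (i:ℕ)).descFactorial (l.length - 1 - (j:ℕ)) : ℕ) : ℂ) ≠ 0 := by
      intro h0
      rw [h0, mul_zero] at h3
      exact h2 h3
    rw [mul_div_assoc, mul_assoc, ← div_div, div_mul_cancel₀ _ h4]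
  · -- negative case
    rw [Acal, binC, if_neg (by omega)]
    have hzero : Vmat l i j = 0 := by
      rw [Vmat, Matrix.of_apply]
      refine Finset.prod_eq_zero
        (Finset.mem_range.2 (show mFun l (i:ℕ) < l.length - 1 - (j:ℕ) by omega)) ?_
      rw [sub_self]
    rw [hzero]
    ring

lemma det_scaled :
    (∏ j : Fin l.length, eCol a l (j:ℕ)) * (Mmat a l * Tmat l).det
      = (∏ i : Fin l.length, cRow a l (i:ℕ)) * (Vmat l).det := by
  have h1 : (Matrix.of fun i j : Fin l.length => eCol a l (j:ℕ) * (Mmat a l * Tmat l) i j).det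
      = (∏ j : Fin l.length, eCol a l (j:ℕ)) * (Mmat a l * Tmat l).det :=
    Matrix.det_mul_row _ _
  have h2 : (Matrix.of fun i j : Fin l.length => cRow a l (i:ℕ) * Vmat l i j).det
      = (∏ i : Fin l.length, cRow a l (i:ℕ)) * (Vmat l).det :=
    Matrix.det_mul_column _ _
  rw [← h1, ← h2]
  congr 1
  ext i j
  rw [Matrix.of_apply, Matrix.of_apply, MT_apply, entry_fact]

end Fact
section Vdm
open Polynomial
variable (l : List ℕ)

lemma prod_Ioi_rev (f : Fin l.length → Fin l.length → ℂ) :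
    ∏ i : Fin l.length, ∏ j ∈ Finset.Ioi i, f (j.rev) (i.rev)
      = ∏ i : Fin l.length, ∏ j ∈ Finset.Ioi i, f i j := by
  rw [Finset.prod_sigma', Finset.prod_sigma']
  refine Finset.prod_nbij' (fun p => ⟨p.2.rev, p.1.rev⟩) (fun p => ⟨p.2.rev, p.1.rev⟩)
    ?_ ?_ ?_ ?_ ?_
  · intro p hp
    simp only [Finset.mem_sigma, Finset.mem_univ, Finset.mem_Ioi, true_and] at *
    exact Fin.rev_lt_rev.2 hp
  · intro p hp
    simp only [Finset.mem_sigma, Finset.mem_univ, Finset.mem_Ioi, true_and] at *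
    exact Fin.rev_lt_rev.2 hp
  · intro p hp; simp [Fin.rev_rev]
  · intro p hp; simp [Fin.rev_rev]
  · intro p hp; rfl

lemma det_Vmat (hl : l.Pairwise (· ≥ ·)) :
    (Vmat l).det = ∏ i : Fin l.length, ∏ j ∈ Finset.Ioi i,
      ((mFun l (i:ℕ) : ℂ) - (mFun l (j:ℕ) : ℂ)) := by
  have hsub : (Vmat l).det = ((Vmat l).submatrix Fin.revPerm Fin.revPerm).det :=
    (Matrix.det_submatrix_equiv_self _ _).symm
  set w : Fin l.length → ℂ := fun i => (mFun l ((i.rev : Fin l.length) : ℕ) : ℂ) with hw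
  set p : Fin l.length → ℂ[X] := fun j => ∏ s ∈ Finset.range (j:ℕ), (X - C ((s:ℕ):ℂ)) with hp
  have hdeg : ∀ j : Fin l.length, (p j).natDegree = (j:ℕ) := by
    intro j
    rw [hp]
    rw [Polynomial.natDegree_prod _ _ (fun s _ => X_sub_C_ne_zero _),
      Finset.sum_congr rfl (fun s _ => Polynomial.natDegree_X_sub_C ((s:ℕ):ℂ))]
    simp
  have hmonic : ∀ j : Fin l.length, (p j).Monic := fun j =>
    monic_prod_of_monic _ _ (fun s _ => monic_X_sub_C _)
  have hentry : (Vmat l).submatrix Fin.revPerm Fin.revPerm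
      = Matrix.of (fun i j : Fin l.length => (p j).eval (w i)) := by
    ext i j
    simp only [Matrix.submatrix_apply, Vmat, Matrix.of_apply, Fin.revPerm_apply]
    have hval : l.length - 1 - ((j.rev : Fin l.length) : ℕ) = (j:ℕ) := by
      have := Fin.val_rev j
      have hjl := j.isLt
      omega
    rw [hval, hp]
    rw [Polynomial.eval_prod]
    exact Finset.prod_congr rfl fun s _ => by simp [hw]
  rw [hsub, hentry, ← Matrix.det_eval_matrixOfPolynomials_eq_det_vandermonde w p hdeg hmonic,
    Matrix.det_vandermonde]
  have := prod_Ioi_rev l (fun i j => (mFun l (i:ℕ) : ℂ) - (mFun l (j:ℕ) : ℂ))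
  rw [← this]

end Vdm
section Assembly

lemma prod_Ioi_fin {L : ℕ} (i : Fin L) (g : ℕ → ℂ) :
    ∏ j ∈ Finset.Ioi i, g (j:ℕ) = ∏ k ∈ Finset.Ioo (i:ℕ) L, g k := by
  refine Finset.prod_bij (fun j _ => (j:ℕ)) ?_ ?_ ?_ ?_
  · intro j hj
    rw [Finset.mem_Ioi] at hj
    rw [Finset.mem_Ioo]
    exact ⟨hj, j.isLt⟩
  · intro x hx y hy h
    exact Fin.ext h
  · intro k hk
    rw [Finset.mem_Ioo] at hk
    exact ⟨⟨k, hk.2⟩, Finset.mem_Ioi.2 (by exact hk.1), rfl⟩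
  · intro j hj; rfl

variable (a : ℂ) (l : List ℕ) (hl : l.Pairwise (· ≥ ·))

include hl in
lemma hook_times_delta :
    hookProdC l * (∏ i : Fin l.length, ∏ j ∈ Finset.Ioi i,
        ((mFun l (i:ℕ) : ℂ) - (mFun l (j:ℕ) : ℂ)))
      = ∏ i ∈ Finset.range l.length, (((mFun l i).factorial : ℕ) : ℂ) := by
  have hΔ : (∏ i : Fin l.length, ∏ j ∈ Finset.Ioi i,
        ((mFun l (i:ℕ) : ℂ) - (mFun l (j:ℕ) : ℂ)))
      = ∏ i ∈ Finset.range l.length, ∏ k ∈ Finset.Ioo i l.length,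
          (((mFun l i - mFun l k : ℕ)) : ℂ) := by
    rw [← Fin.prod_univ_eq_prod_range (fun i => ∏ k ∈ Finset.Ioo i l.length,
      (((mFun l i - mFun l k : ℕ)) : ℂ)) l.length]
    refine Finset.prod_congr rfl fun i _ => ?_
    rw [prod_Ioi_fin i (fun k => (mFun l (i:ℕ) : ℂ) - (mFun l k : ℂ))]
    refine Finset.prod_congr rfl fun k hk => ?_
    rw [Finset.mem_Ioo] at hk
    rw [Nat.cast_sub (le_of_lt (mFun_lt hl hk.1 hk.2))]
  rw [hΔ, hookProdC, ← Finset.prod_mul_distrib]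
  refine Finset.prod_congr rfl fun i hi => ?_
  rw [Finset.mem_range] at hi
  rw [← Nat.cast_prod, ← Nat.cast_prod, ← Nat.cast_mul, row_identity hl hi]

include hl in
lemma generic_case (ha : ∀ n : ℕ, a ≠ (n:ℂ)) :
    schurP (fun m => a / (m : ℂ)) l =
      (∏ i ∈ Finset.range l.length, ∏ j ∈ Finset.range (l.getD i 0),
        (a + (j : ℂ) - (i : ℂ))) / hookProdC l := by
  classical
  set L := l.length with hLdef
  set E := ∏ j : Fin l.length, eCol a l (j:ℕ) with hE
  set Cnt := ∏ i ∈ Finset.range l.length, ∏ j ∈ Finset.range (l.getD i 0),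
    (a + (j : ℂ) - (i : ℂ)) with hCnt
  set F := ∏ i ∈ Finset.range l.length, (((mFun l i).factorial : ℕ) : ℂ) with hF
  set Δ := ∏ i : Fin l.length, ∏ j ∈ Finset.Ioi i,
    ((mFun l (i:ℕ) : ℂ) - (mFun l (j:ℕ) : ℂ)) with hΔdef
  -- nonvanishing
  have hano : ∀ k : ℕ, k + 1 < l.length → a - (l.length : ℂ) + 1 + (k : ℂ) ≠ 0 := by
    intro k hc h0
    have : a = (((l.length - 1 - k : ℕ)) : ℂ) := by
      push_cast [Nat.cast_sub (by omega : k ≤ l.length - 1),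
        Nat.cast_sub (by omega : 1 ≤ l.length)]
      linear_combination h0
    exact ha _ this
  have hEne : E ≠ 0 := by
    rw [hE]
    refine Finset.prod_ne_zero_iff.2 fun j _ => ?_
    rw [eCol]
    refine Finset.prod_ne_zero_iff.2 fun k hk => ?_
    rw [Finset.mem_range] at hk
    exact hano k (by have := j.isLt; omega)
  have hFne : F ≠ 0 := by
    rw [hF]
    refine Finset.prod_ne_zero_iff.2 fun i _ => ?_
    exact Nat.cast_ne_zero.2 (Nat.factorial_ne_zero _)
  have hΔne : Δ ≠ 0 := by
    rw [hΔdef]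
    refine Finset.prod_ne_zero_iff.2 fun i _ => ?_
    refine Finset.prod_ne_zero_iff.2 fun j hj => ?_
    rw [Finset.mem_Ioi] at hj
    have := mFun_lt hl (show (i:ℕ) < (j:ℕ) from hj) j.isLt
    intro h0
    rw [sub_eq_zero] at h0
    have := Nat.cast_injective (R := ℂ) h0
    omega
  -- main chain
  have hdetM : schurP (fun m => a / (m : ℂ)) l = (Mmat a l * Tmat l).det := by
    rw [schurP_eq_det, Matrix.det_mul, det_Tmat, mul_one]
  have hscaled := det_scaled a l
  rw [det_Vmat l hl] at hscaled
  have hpochsplit : ∀ i : Fin l.length,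
      pochC (a - l.length + 1) (mFun l (i:ℕ))
        = eCol a l (i:ℕ) * ∏ j ∈ Finset.range (l.getD (i:ℕ) 0), (a + (j : ℂ) - ((i:ℕ) : ℂ)) := by
    intro i
    have hiL := i.isLt
    rw [show mFun l (i:ℕ) = (l.length - 1 - (i:ℕ)) + l.getD (i:ℕ) 0 from by unfold mFun; omega,
      pochC_add, eCol]
    congr 1
    rw [pochC]
    refine Finset.prod_congr rfl fun j _ => ?_
    have : ((l.length - 1 - (i:ℕ) : ℕ) : ℂ) = (l.length : ℂ) - 1 - ((i:ℕ):ℂ) := by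
      push_cast [Nat.cast_sub (by omega : (i:ℕ) ≤ l.length - 1),
        Nat.cast_sub (by omega : 1 ≤ l.length)]
      ring
    rw [this]
    ring
  have hprodc : (∏ i : Fin l.length, cRow a l (i:ℕ)) * F = E * Cnt := by
    rw [hF, hCnt]
    have : ∏ i : Fin l.length, cRow a l (i:ℕ)
        = (∏ i : Fin l.length, pochC (a - l.length + 1) (mFun l (i:ℕ)))
          / (∏ i ∈ Finset.range l.length, (((mFun l i).factorial : ℕ) : ℂ)) := by
      rw [← Fin.prod_univ_eq_prod_range (fun i => (((mFun l i).factorial : ℕ) : ℂ)) l.length,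
        ← Finset.prod_div_distrib]
      rfl
    rw [this, div_mul_cancel₀ _ hFne]
    rw [Finset.prod_congr rfl (fun i _ => hpochsplit i), Finset.prod_mul_distrib]
    rw [hE, ← Fin.prod_univ_eq_prod_range (fun i => ∏ j ∈ Finset.range (l.getD i 0),
      (a + (j : ℂ) - (i : ℂ))) l.length]
  have hhook : hookProdC l * Δ = F := hook_times_delta l hl
  have hHne : hookProdC l ≠ 0 := by
    intro h0
    rw [h0, zero_mul] at hhook
    exact hFne hhook.symm
  -- combine: E * detM = (∏ c) * Δ ; (∏c) * F = E * Cnt ; H * Δ = F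
  have key : E * (schurP (fun m => a / (m : ℂ)) l) * F = E * Cnt * Δ := by
    rw [hdetM]
    calc E * (Mmat a l * Tmat l).det * F
        = ((∏ i : Fin l.length, cRow a l (i:ℕ)) * Δ) * F := by rw [← hscaled]
      _ = ((∏ i : Fin l.length, cRow a l (i:ℕ)) * F) * Δ := by ring
      _ = E * Cnt * Δ := by rw [hprodc]
  rw [← hhook] at key
  have key2 : schurP (fun m => a / (m : ℂ)) l * hookProdC l = Cnt := by
    have h2 : (schurP (fun m => a / (m : ℂ)) l * hookProdC l) * (E * Δ) = Cnt * (E * Δ) := by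
      linear_combination key
    exact mul_right_cancel₀ (mul_ne_zero hEne hΔne) h2
  rw [eq_div_iff hHne]
  exact key2

end Assembly
section Poly
open Polynomial

noncomputable def Pmat (l : List ℕ) : Matrix (Fin l.length) (Fin l.length) ℂ[X] :=
  Matrix.of fun i j : Fin l.length =>
    if 0 ≤ ((l.get i : ℤ) - ((i:ℕ):ℤ) + ((j:ℕ):ℤ)) then
      (∏ k ∈ Finset.range (((l.get i : ℤ) - ((i:ℕ):ℤ) + ((j:ℕ):ℤ)).toNat), (X + C ((k:ℕ):ℂ)))
        * C (((((((l.get i : ℤ) - ((i:ℕ):ℤ) + ((j:ℕ):ℤ)).toNat).factorial : ℕ)) : ℂ)⁻¹)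
    else 0

noncomputable def Qpol (l : List ℕ) : ℂ[X] :=
  (∏ i ∈ Finset.range l.length, ∏ j ∈ Finset.range (l.getD i 0),
    (X + C (((j:ℕ):ℂ) - ((i:ℕ):ℂ)))) * C (hookProdC l)⁻¹

lemma eval_Pmat (a : ℂ) (l : List ℕ) :
    ((Pmat l).det).eval a = schurP (fun m => a / (m : ℂ)) l := by
  have h1 : ((Pmat l).det).eval a = (((evalRingHom a).mapMatrix (Pmat l)) : Matrix _ _ ℂ).det :=
    RingHom.map_det (evalRingHom a) (Pmat l)
  rw [h1, schurP]
  congr 1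
  ext i j
  simp only [RingHom.mapMatrix_apply, Matrix.map_apply, Pmat, Matrix.of_apply]
  rw [pInt]
  split_ifs with h
  · rw [elemSchur_content]
    simp only [coe_evalRingHom, eval_mul, eval_prod, eval_add, eval_X, eval_C]
    rw [pochC, div_eq_mul_inv]
  · simp
end Poly

section PolyQ
open Polynomial

lemma eval_Qpol (a : ℂ) (l : List ℕ) :
    (Qpol l).eval a
      = (∏ i ∈ Finset.range l.length, ∏ j ∈ Finset.range (l.getD i 0),
          (a + (j : ℂ) - (i : ℂ))) / hookProdC l := by
  rw [Qpol, eval_mul, eval_C, eval_prod, div_eq_mul_inv]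
  congr 1
  refine Finset.prod_congr rfl fun i _ => ?_
  rw [eval_prod]
  refine Finset.prod_congr rfl fun j _ => ?_
  rw [eval_add, eval_X, eval_C]
  ring
end PolyQ

theorem stmt8 (a : ℂ) (N : ℕ) (l : List ℕ) (hl : l.Pairwise (· ≥ ·)) (hlen : l.length ≤ N) :
    schurP (fun m => a / (m : ℂ)) l =
      (∏ i ∈ Finset.range l.length, ∏ j ∈ Finset.range (l.getD i 0),
        (a + (j : ℂ) - (i : ℂ))) / hookProdC l := by
  have hgen : ∀ b : ℂ, (∀ n : ℕ, b ≠ (n:ℂ)) →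
      Polynomial.eval b ((Pmat l).det) = Polynomial.eval b (Qpol l) := by
    intro b hb
    rw [eval_Pmat, eval_Qpol, generic_case b l hl hb]
  have hinj : Function.Injective (fun n : ℕ => (n:ℂ) + 1/2) := by
    intro n m h
    simp only [add_left_inj] at h
    exact_mod_cast h
  have hmem : ∀ n : ℕ, ((n:ℂ) + 1/2) ∈ {x : ℂ | Polynomial.eval x ((Pmat l).det)
      = Polynomial.eval x (Qpol l)} := by
    intro n
    refine hgen _ fun k hk => ?_
    have hre := congrArg Complex.re hk
    simp only [Complex.add_re, Complex.natCast_re] at hre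
    have h2 : (1/2 : ℂ).re = 1/2 := by norm_num
    rw [h2] at hre
    have : (2 * n + 1 : ℝ) = (2 * k : ℝ) := by linarith
    have : (2 * n + 1 : ℕ) = (2 * k : ℕ) := by exact_mod_cast this
    omega
  have hinf : Set.Infinite {x : ℂ | Polynomial.eval x ((Pmat l).det)
      = Polynomial.eval x (Qpol l)} :=
    Set.Infinite.mono (Set.range_subset_iff.2 hmem) (Set.infinite_range_of_injective hinj)
  have hPQ := Polynomial.eq_of_infinite_eval_eq _ _ hinf
  rw [← eval_Pmat a l, hPQ, eval_Qpol]
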